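/- Suppose q̃ : [0,∞) → ℝ is continuously differentiable and satisfies |q̃(t)| ≤ C₁(1+t)^{−2} for some constant C₁, and solves ∂_t q̃(t) = −Z ∫₀^t M(t−s) q̃(s) ds + h(t), where h : [0,∞) → ℝ is continuous with |h(t)| ≤ c₂ (1+t)^{−3/2} for some constant c₂. Then for all t ≥ 0: q̃(t) = K(t) q̃(0) + ∫₀^t K(t−s) h(s) ds. -/

import Mathlib

open MeasureTheory Filter Real
open FourierTransform RealInnerProductSpace
set_option linter.unusedVariables false

noncomputable section

/-- ℝ³ -/
abbrev R3 := EuclideanSpace ℝ (Fin 3)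

/-- The Fourier transform `Ŵ(ξ) = (2π)^{-3/2} ∫ e^{iξ·x} W(x) dx`. -/
noncomputable def hatW (W : R3 → ℝ) (ξ : R3) : ℂ :=
  (((2 * π) ^ (-(3:ℝ)/2) : ℝ) : ℂ) *
    ∫ x : R3, Complex.exp (Complex.I * ((inner ℝ ξ x : ℝ) : ℂ)) * (W x : ℂ)

/-- `M(t) = ∫ |Ŵ(ξ)|² cos(|ξ|²t/2) dξ = Re⟨W, e^{iΔt/2} W⟩`. -/
noncomputable def Mfun (W : R3 → ℝ) (t : ℝ) : ℝ :=
  ∫ ξ : R3, ‖hatW W ξ‖^2 * Real.cos (‖ξ‖^2 * t / 2)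

/-- W as a complex-valued Schwartz map. -/
def Wcx (W : SchwartzMap R3 ℝ) : SchwartzMap R3 ℂ where
  toFun x := (W x : ℂ)
  smooth' := Complex.ofRealCLM.contDiff.comp (W.smooth ⊤)
  decay' := by
    intro k n
    obtain ⟨C, hC⟩ := W.decay' k n
    refine ⟨C, fun x => ?_⟩
    have : (fun x : R3 => ((W x : ℂ))) = (Complex.ofRealLI) ∘ (⇑W) := rfl
    rw [this, Complex.ofRealLI.norm_iteratedFDeriv_comp_left (W.smooth n).contDiffAt le_rfl]
    exact hC x

lemma hatW_eq (W : SchwartzMap R3 ℝ) (ξ : R3) :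
    hatW (⇑W) ξ = (((2 * π) ^ (-(3:ℝ)/2) : ℝ) : ℂ) *
      𝓕 (⇑(Wcx W)) ((-(2 * π)⁻¹) • ξ) := by
  rw [hatW, Real.fourier_eq']
  congr 1
  apply integral_congr_ae
  filter_upwards with x
  rw [smul_eq_mul]
  congr 1
  have h1 : (inner ℝ x ((-(2 * π)⁻¹) • ξ) : ℝ) = (-(2 * π)⁻¹) * (inner ℝ x ξ : ℝ) :=
    real_inner_smul_right _ _ _
  rw [h1, real_inner_comm x ξ]
  have h2 : -2 * π * (-(2 * π)⁻¹ * (inner ℝ x ξ : ℝ)) = (inner ℝ x ξ : ℝ) := by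
    field_simp
  rw [h2, mul_comm]

lemma hatW_cont (W : SchwartzMap R3 ℝ) : Continuous (hatW (⇑W)) := by
  have : hatW (⇑W) = fun ξ => (((2 * π) ^ (-(3:ℝ)/2) : ℝ) : ℂ) *
      (SchwartzMap.fourierTransformCLM ℂ (Wcx W)) ((-(2 * π)⁻¹) • ξ) := by
    funext ξ; rw [hatW_eq]; rfl
  rw [this]
  exact continuous_const.mul ((SchwartzMap.fourierTransformCLM ℂ (Wcx W)).continuous.comp
    (continuous_const_smul _))

lemma integrable_hatW_sq (W : SchwartzMap R3 ℝ) :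
    Integrable (fun ξ : R3 => (‖hatW (⇑W) ξ‖)^2) := by
  set G := SchwartzMap.fourierTransformCLM ℂ (Wcx W) with hG
  have h1 : Integrable (fun ξ : R3 => ‖G ξ‖^2) := by
    obtain ⟨C, hC⟩ := G.decay' 0 0
    simp only [pow_zero, one_mul, norm_iteratedFDeriv_zero] at hC
    have hC' : ∀ x, ‖G x‖ ≤ C := hC
    refine Integrable.mono' ((G.integrable.norm).const_mul C) ?_ ?_
    · exact (G.continuous.norm.pow 2).aestronglyMeasurable
    · filter_upwards with x
      have : ‖G x‖^2 ≤ C * ‖G x‖ := by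
        nlinarith [norm_nonneg (G x), hC' x]
      simpa [abs_of_nonneg (sq_nonneg ‖G x‖), sq_abs] using this
  have h2 : Integrable (fun ξ : R3 => ‖G ((-(2 * π)⁻¹) • ξ)‖^2) :=
    h1.comp_smul (by
      have : (2 * π)⁻¹ ≠ 0 := by positivity
      simpa using this)
  have h3 : (fun ξ : R3 => (‖hatW (⇑W) ξ‖)^2)
      = fun ξ => (((2 * π) ^ (-(3:ℝ)/2) : ℝ))^2 * ‖G ((-(2 * π)⁻¹) • ξ)‖^2 := by
    funext ξ
    rw [hatW_eq]
    rw [norm_mul, mul_pow, Complex.norm_real, Real.norm_eq_abs,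
      abs_of_nonneg (by positivity : (0:ℝ) ≤ (2 * π) ^ (-(3:ℝ)/2))]
    rfl
  rw [h3]
  exact h2.const_mul _

lemma Mfun_cont (W : SchwartzMap R3 ℝ) : Continuous (Mfun (⇑W)) := by
  apply continuous_of_dominated (bound := fun ξ : R3 => (‖hatW (⇑W) ξ‖)^2)
  · intro t
    have hc : Continuous fun ξ : R3 => ‖hatW (⇑W) ξ‖ ^ 2 :=
      (continuous_norm.comp (hatW_cont W)).pow 2
    exact Continuous.aestronglyMeasurable (by fun_prop)
  · intro t
    filter_upwards with ξ
    rw [norm_mul]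
    calc ‖(‖hatW (⇑W) ξ‖)^2‖ * ‖Real.cos (‖ξ‖^2 * t / 2)‖
        ≤ ‖(‖hatW (⇑W) ξ‖)^2‖ * 1 := by
          gcongr; exact Real.abs_cos_le_one _
      _ = (‖hatW (⇑W) ξ‖)^2 := by
          rw [mul_one, Real.norm_eq_abs, abs_of_nonneg (by positivity)]
  · exact integrable_hatW_sq W
  · filter_upwards with ξ
    fun_prop

lemma Mfun_bound (W : SchwartzMap R3 ℝ) :
    ∃ B : ℝ, 0 ≤ B ∧ ∀ t : ℝ, |Mfun (⇑W) t| ≤ B := by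
  refine ⟨∫ ξ : R3, (‖hatW (⇑W) ξ‖)^2, by positivity, fun t => ?_⟩
  rw [Mfun, ← Real.norm_eq_abs]
  calc ‖∫ ξ : R3, (‖hatW (⇑W) ξ‖)^2 * Real.cos (‖ξ‖^2 * t / 2)‖
      ≤ ∫ ξ : R3, ‖(‖hatW (⇑W) ξ‖)^2 * Real.cos (‖ξ‖^2 * t / 2)‖ :=
        norm_integral_le_integral_norm _
    _ ≤ ∫ ξ : R3, (‖hatW (⇑W) ξ‖)^2 := by
        apply integral_mono_of_nonneg
        · filter_upwards with ξ; positivity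
        · exact integrable_hatW_sq W
        · filter_upwards with ξ
          rw [norm_mul, Real.norm_eq_abs (Real.cos _),
            Real.norm_eq_abs, abs_of_nonneg (by positivity : (0:ℝ) ≤ (‖hatW (⇑W) ξ‖)^2)]
          nlinarith [Real.abs_cos_le_one (‖ξ‖^2 * t / 2), sq_nonneg (‖hatW (⇑W) ξ‖),
            abs_nonneg (Real.cos (‖ξ‖^2 * t / 2))]

lemma triangle_swap (F : ℝ → ℝ → ℝ) (hF : Continuous (Function.uncurry F))
    {t : ℝ} (ht : 0 ≤ t) :
    ∫ τ in (0:ℝ)..t, ∫ s in (0:ℝ)..τ, F τ s = ∫ s in (0:ℝ)..t, ∫ τ in s..t, F τ s := by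
  set T : Set (ℝ × ℝ) := {p | p.2 ≤ p.1} ∩ (Set.Ioc 0 t ×ˢ Set.Ioc 0 t) with hT
  have hTm : MeasurableSet T :=
    (measurableSet_le measurable_snd measurable_fst).inter
      (measurableSet_Ioc.prod measurableSet_Ioc)
  set G : ℝ × ℝ → ℝ := T.indicator (Function.uncurry F) with hG
  obtain ⟨C, hC⟩ : ∃ C, ∀ p ∈ Set.Icc 0 t ×ˢ Set.Icc 0 t, |Function.uncurry F p| ≤ C := by
    obtain ⟨C, hC⟩ := (isCompact_Icc.prod isCompact_Icc).exists_bound_of_continuousOn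
      (hF.continuousOn (s := Set.Icc (0:ℝ) t ×ˢ Set.Icc (0:ℝ) t))
    exact ⟨|C|, fun p hp => (hC p hp).trans (le_abs_self C)⟩
  have hTsub : ∀ p ∈ T, p ∈ Set.Icc (0:ℝ) t ×ˢ Set.Icc (0:ℝ) t := by
    rintro p ⟨h1, h2, h3⟩
    exact ⟨⟨h2.1.le, h2.2⟩, ⟨h3.1.le, h3.2⟩⟩
  have hGi : Integrable G (volume.prod volume) := by
    have hmeas : AEStronglyMeasurable G (volume.prod volume) :=
      (hF.aestronglyMeasurable).indicator hTm
    refine ⟨hmeas, ?_⟩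
    have hint : Integrable ((Set.Icc (0:ℝ) t ×ˢ Set.Icc (0:ℝ) t).indicator (fun _ => C))
        (volume.prod volume) := by
      apply (integrable_indicator_iff (measurableSet_Icc.prod measurableSet_Icc)).2
      exact integrableOn_const (C := C) (by
        rw [Measure.prod_prod]
        exact ENNReal.mul_ne_top (by simp) (by simp))
    apply HasFiniteIntegral.mono hint.2
    filter_upwards with p
    by_cases hp : p ∈ T
    · have hp' := hTsub p hp
      rw [hG, Set.indicator_of_mem hp, Set.indicator_of_mem hp']
      simpa [Real.norm_eq_abs] using (hC p hp').trans (le_abs_self C)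
    · rw [hG, Set.indicator_of_notMem hp]
      simp
  have hL : (∫ τ in (0:ℝ)..t, ∫ s in (0:ℝ)..τ, F τ s) = ∫ τ, ∫ s, G (τ, s) := by
    rw [intervalIntegral.integral_of_le ht, ← MeasureTheory.integral_indicator measurableSet_Ioc]
    congr 1
    funext τ
    by_cases hτ : τ ∈ Set.Ioc 0 t
    · rw [Set.indicator_of_mem hτ, intervalIntegral.integral_of_le hτ.1.le,
        ← MeasureTheory.integral_indicator measurableSet_Ioc]
      congr 1
      funext s
      by_cases hs : s ∈ Set.Ioc 0 τ
      · have hmem : (τ, s) ∈ T := by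
          rw [hT]
          exact Set.mem_inter hs.2 (Set.mk_mem_prod hτ ⟨hs.1, hs.2.trans hτ.2⟩)
        rw [Set.indicator_of_mem hs, hG, Set.indicator_of_mem hmem]
        rfl
      · rw [Set.indicator_of_notMem hs, hG, Set.indicator_of_notMem]
        rintro ⟨h1, h2, h3⟩
        exact hs ⟨h3.1, h1⟩
    · rw [Set.indicator_of_notMem hτ]
      have hz : ∀ s, G (τ, s) = 0 := fun s =>
        Set.indicator_of_notMem (fun hp => hτ hp.2.1) _
      simp [hz]
  have hR : (∫ s in (0:ℝ)..t, ∫ τ in s..t, F τ s) = ∫ s, ∫ τ, G (τ, s) := by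
    rw [intervalIntegral.integral_of_le ht, ← MeasureTheory.integral_indicator measurableSet_Ioc]
    congr 1
    funext s
    by_cases hs : s ∈ Set.Ioc 0 t
    · rw [Set.indicator_of_mem hs, intervalIntegral.integral_of_le hs.2,
        ← MeasureTheory.integral_indicator measurableSet_Ioc]
      apply MeasureTheory.integral_congr_ae
      have hpt : ({s} : Set ℝ) =ᵐ[volume] (∅ : Set ℝ) := by
        simp [ae_eq_empty]
      filter_upwards [compl_mem_ae_iff.2 (measure_singleton s)] with τ hτs
      have hτs' : τ ≠ s := hτs
      by_cases hτ : τ ∈ Set.Ioc s t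
      · have hmem : (τ, s) ∈ T := by
          rw [hT]
          exact Set.mem_inter hτ.1.le (Set.mk_mem_prod ⟨hs.1.trans hτ.1, hτ.2⟩ hs)
        rw [Set.indicator_of_mem hτ, hG, Set.indicator_of_mem hmem]
        rfl
      · rw [Set.indicator_of_notMem hτ, hG, Set.indicator_of_notMem]
        rintro ⟨h1, h2, h3⟩
        exact hτ ⟨lt_of_le_of_ne h1 (Ne.symm hτs'), h2.2⟩
    · rw [Set.indicator_of_notMem hs]
      have hz : ∀ τ, G (τ, s) = 0 := fun τ =>
        Set.indicator_of_notMem (fun hp => hs hp.2.2) _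
      simp [hz]
  rw [hL, hR]
  exact integral_integral_swap hGi

lemma duhamel (M : ℝ → ℝ) (hMc : Continuous M) (B : ℝ) (hB : ∀ t, |M t| ≤ B)
    (Z : ℝ) (hZ : 0 ≤ Z) (K q h : ℝ → ℝ)
    (hKc : Continuous K) (hqc : Continuous q) (hhc : Continuous h)
    (hK : ∀ t : ℝ, 0 ≤ t →
      K t = 1 + ∫ τ in (0:ℝ)..t, -(Z * ∫ s in (0:ℝ)..τ, M (τ - s) * K s))
    (hq : ∀ t : ℝ, 0 ≤ t →
      q t = q 0 + ∫ τ in (0:ℝ)..t,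
        (-(Z * ∫ s in (0:ℝ)..τ, M (τ - s) * q s) + h τ)) :
    ∀ t : ℝ, 0 ≤ t → q t = K t * q 0 + ∫ s in (0:ℝ)..t, K (t - s) * h s := by
  have hB0 : 0 ≤ B := (abs_nonneg _).trans (hB 0)
  -- the convolution operator with kernel M
  set cM : (ℝ → ℝ) → ℝ → ℝ := fun f τ => ∫ s in (0:ℝ)..τ, M (τ - s) * f s with hcM
  have hcMc : ∀ f : ℝ → ℝ, Continuous f → Continuous (cM f) := by
    intro f hf
    apply intervalIntegral.continuous_parametric_intervalIntegral_of_continuous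
      (f := fun τ s => M (τ - s) * f s) (s := id) _ continuous_id
    exact (hMc.comp (continuous_fst.sub continuous_snd)).mul (hf.comp continuous_snd)
  set KH : ℝ → ℝ := fun t => ∫ s in (0:ℝ)..t, K (t - s) * h s with hKH
  have hKHc : Continuous KH := by
    apply intervalIntegral.continuous_parametric_intervalIntegral_of_continuous
      (f := fun t s => K (t - s) * h s) (s := id) _ continuous_id
    exact (hKc.comp (continuous_fst.sub continuous_snd)).mul (hhc.comp continuous_snd)
  set r : ℝ → ℝ := fun t => K t * q 0 + KH t with hr
  have hrc : Continuous r := (hKc.mul continuous_const).add hKHc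
  -- Claim A2 : twisted convolution identity
  have hA2 : ∀ τ : ℝ, 0 ≤ τ →
      (∫ s in (0:ℝ)..τ, cM K (τ - s) * h s) = cM KH τ := by
    intro τ hτ
    have e1 : ∀ s : ℝ, cM K (τ - s) = ∫ ρ in s..τ, M (τ - ρ) * K (ρ - s) := by
      intro s
      have e2 := intervalIntegral.integral_comp_sub_right
        (a := s) (b := τ) (fun x => M (τ - s - x) * K x) s
      simp only [sub_self, sub_sub_sub_cancel_right] at e2
      rw [hcM]
      exact e2.symm
    calc (∫ s in (0:ℝ)..τ, cM K (τ - s) * h s)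
        = ∫ s in (0:ℝ)..τ, ∫ ρ in s..τ, (M (τ - ρ) * K (ρ - s) * h s) := by
          apply intervalIntegral.integral_congr
          intro s _
          simp only []
          rw [e1 s, ← intervalIntegral.integral_mul_const]
      _ = ∫ ρ in (0:ℝ)..τ, ∫ s in (0:ℝ)..ρ, (M (τ - ρ) * K (ρ - s) * h s) := by
          refine (triangle_swap (fun ρ s => M (τ - ρ) * K (ρ - s) * h s) ?_ hτ).symm
          exact ((hMc.comp ((continuous_const.sub continuous_fst))).mul
            (hKc.comp (continuous_fst.sub continuous_snd))).mul (hhc.comp continuous_snd)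
      _ = cM KH τ := by
          apply intervalIntegral.integral_congr
          intro ρ _
          simp only [mul_assoc]
          rw [intervalIntegral.integral_const_mul]
  -- Claim A1 : integrated equation for KH
  have hA1 : ∀ t : ℝ, 0 ≤ t →
      KH t = (∫ τ in (0:ℝ)..t, h τ) + ∫ τ in (0:ℝ)..t, -(Z * cM KH τ) := by
    intro t ht
    have e0 : KH t = ∫ s in (0:ℝ)..t,
        (h s + (∫ σ in (0:ℝ)..(t - s), -(Z * cM K σ)) * h s) := by
      apply intervalIntegral.integral_congr
      intro s hs
      rw [Set.uIcc_of_le ht] at hs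
      have hts : 0 ≤ t - s := by linarith [hs.2]
      simp only []
      rw [hK (t - s) hts]
      ring
    have hGc : Continuous fun s => (∫ σ in (0:ℝ)..(t - s), -(Z * cM K σ)) * h s := by
      refine Continuous.mul ?_ hhc
      apply intervalIntegral.continuous_parametric_intervalIntegral_of_continuous
        (f := fun (_ : ℝ) σ => -(Z * cM K σ)) (s := fun s => t - s)
      · exact ((continuous_const.mul ((hcMc K hKc).comp continuous_snd)).neg)
      · exact continuous_const.sub continuous_id
    have e1 : KH t = (∫ s in (0:ℝ)..t, h s) +
        ∫ s in (0:ℝ)..t, (∫ σ in (0:ℝ)..(t - s), -(Z * cM K σ)) * h s := by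
      rw [e0, intervalIntegral.integral_add (hhc.intervalIntegrable _ _)
        (hGc.intervalIntegrable _ _)]
    have e2 : ∀ s : ℝ, (∫ σ in (0:ℝ)..(t - s), -(Z * cM K σ)) =
        ∫ τ in s..t, -(Z * cM K (τ - s)) := by
      intro s
      have := intervalIntegral.integral_comp_sub_right
        (a := s) (b := t) (fun x => -(Z * cM K x)) s
      simp only [sub_self] at this
      exact this.symm
    have e3 : (∫ s in (0:ℝ)..t, (∫ σ in (0:ℝ)..(t - s), -(Z * cM K σ)) * h s) =
        ∫ τ in (0:ℝ)..t, -(Z * cM KH τ) := by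
      calc (∫ s in (0:ℝ)..t, (∫ σ in (0:ℝ)..(t - s), -(Z * cM K σ)) * h s)
          = ∫ s in (0:ℝ)..t, ∫ τ in s..t, (-(Z * cM K (τ - s)) * h s) := by
            apply intervalIntegral.integral_congr
            intro s _
            simp only []
            rw [e2 s, ← intervalIntegral.integral_mul_const]
        _ = ∫ τ in (0:ℝ)..t, ∫ s in (0:ℝ)..τ, (-(Z * cM K (τ - s)) * h s) := by
            refine (triangle_swap (fun τ s => -(Z * cM K (τ - s)) * h s) ?_ ht).symm
            exact ((continuous_const.mul ((hcMc K hKc).comp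
              (continuous_fst.sub continuous_snd))).neg).mul (hhc.comp continuous_snd)
        _ = ∫ τ in (0:ℝ)..t, -(Z * cM KH τ) := by
            apply intervalIntegral.integral_congr
            intro τ hτ
            rw [Set.uIcc_of_le ht] at hτ
            have : ∀ s : ℝ, -(Z * cM K (τ - s)) * h s = (-Z) * (cM K (τ - s) * h s) := by
              intro s; ring
            simp only [this]
            rw [intervalIntegral.integral_const_mul, hA2 τ hτ.1]
            ring
    rw [e1, e3]
  -- Claim A : integrated equation for r
  have hA : ∀ t : ℝ, 0 ≤ t →
      r t = q 0 + ∫ τ in (0:ℝ)..t, (-(Z * cM r τ) + h τ) := by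
    intro t ht
    have lin : ∀ τ : ℝ, cM r τ = cM K τ * q 0 + cM KH τ := by
      intro τ
      rw [hcM]
      simp only [hr]
      have : ∀ s : ℝ, M (τ - s) * (K s * q 0 + KH s)
          = M (τ - s) * K s * q 0 + M (τ - s) * KH s := by intro s; ring
      simp only [this]
      rw [intervalIntegral.integral_add, intervalIntegral.integral_mul_const]
      · exact (((hMc.comp (continuous_const.sub continuous_id)).mul hKc).mul
          continuous_const).intervalIntegrable _ _
      · exact ((hMc.comp (continuous_const.sub continuous_id)).mul hKHc).intervalIntegrable _ _
    have e4 : r t = (1 + ∫ τ in (0:ℝ)..t, -(Z * cM K τ)) * q 0 + KH t := by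
      rw [hr]; simp only; rw [← hK t ht]
    rw [e4, hA1 t ht]
    have i1 : IntervalIntegrable (fun τ => -(Z * cM K τ) * q 0) volume 0 t :=
      (((continuous_const.mul (hcMc K hKc)).neg).mul continuous_const).intervalIntegrable _ _
    have i2 : IntervalIntegrable h volume 0 t := hhc.intervalIntegrable _ _
    have i3 : IntervalIntegrable (fun τ => -(Z * cM KH τ)) volume 0 t :=
      ((continuous_const.mul (hcMc KH hKHc)).neg).intervalIntegrable _ _
    have e5 : (∫ τ in (0:ℝ)..t, (-(Z * cM r τ) + h τ))
        = (∫ τ in (0:ℝ)..t, -(Z * cM K τ) * q 0) +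
          ((∫ τ in (0:ℝ)..t, h τ) + ∫ τ in (0:ℝ)..t, -(Z * cM KH τ)) := by
      rw [← intervalIntegral.integral_add i2 i3, ← intervalIntegral.integral_add i1 (i2.add i3)]
      apply intervalIntegral.integral_congr
      intro τ _
      simp only []
      rw [lin τ]
      ring
    rw [e5, intervalIntegral.integral_mul_const]
    ring
  -- Step B: the difference satisfies the homogeneous integrated equation
  set u : ℝ → ℝ := fun t => q t - r t with hu
  have huc : Continuous u := hqc.sub hrc
  have hBu : ∀ t : ℝ, 0 ≤ t → u t = ∫ τ in (0:ℝ)..t, -(Z * cM u τ) := by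
    intro t ht
    have iq : IntervalIntegrable (fun τ => -(Z * cM q τ) + h τ) volume 0 t :=
      (((continuous_const.mul (hcMc q hqc)).neg).add hhc).intervalIntegrable _ _
    have ir : IntervalIntegrable (fun τ => -(Z * cM r τ) + h τ) volume 0 t :=
      (((continuous_const.mul (hcMc r hrc)).neg).add hhc).intervalIntegrable _ _
    rw [hu]
    simp only []
    rw [hq t ht, hA t ht]
    have e6 : q 0 + (∫ τ in (0:ℝ)..t, (-(Z * cM q τ) + h τ)) -
        (q 0 + ∫ τ in (0:ℝ)..t, (-(Z * cM r τ) + h τ))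
        = ∫ τ in (0:ℝ)..t, ((-(Z * cM q τ) + h τ) - (-(Z * cM r τ) + h τ)) := by
      rw [intervalIntegral.integral_sub iq ir]; ring
    rw [e6]
    apply intervalIntegral.integral_congr
    intro τ _
    simp only []
    have lin : cM u τ = cM q τ - cM r τ := by
      rw [hcM]
      simp only [hu]
      have e7 : ∀ s : ℝ, M (τ - s) * (q s - r s) = M (τ - s) * q s - M (τ - s) * r s :=
        fun s => by ring
      simp only [e7]
      have i4 : Continuous fun s => M (τ - s) * q s :=
        (hMc.comp (continuous_const.sub continuous_id)).mul hqc
      have i5 : Continuous fun s => M (τ - s) * r s :=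
        (hMc.comp (continuous_const.sub continuous_id)).mul hrc
      rw [intervalIntegral.integral_sub (i4.intervalIntegrable _ _) (i5.intervalIntegrable _ _)]
    rw [lin]
    ring
  -- Step C: Gronwall
  intro t ht
  set φ : ℝ → ℝ := fun x => ∫ σ in (0:ℝ)..x, |u σ| with hφ
  have hφc : Continuous φ := by
    apply intervalIntegral.continuous_parametric_intervalIntegral_of_continuous
      (f := fun (_ : ℝ) σ => |u σ|) (s := id) _ continuous_id
    exact huc.abs.comp continuous_snd
  have hφd : ∀ x : ℝ, HasDerivAt φ (|u x|) x := by
    intro x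
    exact intervalIntegral.integral_hasDerivAt_right ((huc.abs).intervalIntegrable _ _)
      (huc.abs.stronglyMeasurable.stronglyMeasurableAtFilter) (huc.abs.continuousAt)
  have hφmono : ∀ x y : ℝ, x ≤ y → φ x ≤ φ y := by
    intro x y hxy
    have e8 := intervalIntegral.integral_add_adjacent_intervals (μ := volume) (a := (0:ℝ)) (b := x) (c := y)
      ((huc.abs).intervalIntegrable 0 x) ((huc.abs).intervalIntegrable x y)
    have e9 : 0 ≤ ∫ σ in x..y, |u σ| :=
      intervalIntegral.integral_nonneg hxy (fun σ _ => abs_nonneg _)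
    rw [hφ]
    simp only []
    linarith [e8, e9]
  have hφ0 : φ 0 = 0 := intervalIntegral.integral_same
  have hφnonneg : ∀ x : ℝ, 0 ≤ x → 0 ≤ φ x := fun x hx => hφ0 ▸ hφmono 0 x hx
  have hub : ∀ x : ℝ, 0 ≤ x → x ≤ t → |u x| ≤ (Z * B * t) * φ x := by
    intro x hx hxt
    rw [hBu x hx]
    have key : ∀ τ ∈ Set.Ioc (0:ℝ) x, ‖-(Z * cM u τ)‖ ≤ Z * (B * φ x) := by
      intro τ hτ
      rw [Real.norm_eq_abs, abs_neg, abs_mul, abs_of_nonneg hZ]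
      have hcMu : |cM u τ| ≤ B * φ x := by
        calc |cM u τ| ≤ ∫ s in (0:ℝ)..τ, |M (τ - s) * u s| := by
              rw [hcM]
              exact intervalIntegral.abs_integral_le_integral_abs hτ.1.le
          _ ≤ ∫ s in (0:ℝ)..τ, B * |u s| := by
              apply intervalIntegral.integral_mono_on hτ.1.le
              · exact ((hMc.comp (continuous_const.sub continuous_id)).mul
                  huc).abs.intervalIntegrable _ _
              · exact (continuous_const.mul huc.abs).intervalIntegrable _ _
              · intro s _
                rw [abs_mul]
                exact mul_le_mul_of_nonneg_right (hB _) (abs_nonneg _)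
          _ = B * φ τ := by rw [intervalIntegral.integral_const_mul]
          _ ≤ B * φ x := mul_le_mul_of_nonneg_left (hφmono τ x hτ.2) hB0
      exact mul_le_mul_of_nonneg_left hcMu hZ
    calc |∫ τ in (0:ℝ)..x, -(Z * cM u τ)| ≤ (Z * (B * φ x)) * |x - 0| := by
          rw [← Real.norm_eq_abs]
          apply intervalIntegral.norm_integral_le_of_norm_le_const
          intro τ hτ
          rw [Set.uIoc_of_le hx] at hτ
          exact key τ hτ
      _ ≤ (Z * B * t) * φ x := by
          rw [sub_zero, abs_of_nonneg hx]
          have hφx := hφnonneg x hx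
          nlinarith [mul_nonneg (mul_nonneg hZ hB0) hφx]
  have hg := norm_le_gronwallBound_of_norm_deriv_right_le
    (f := φ) (f' := fun x => |u x|) (δ := 0) (K := Z * B * t) (ε := 0) (a := 0) (b := t)
    (hφc.continuousOn) (fun x _ => (hφd x).hasDerivWithinAt)
    (by rw [hφ0]; simp)
    (by
      intro x hx
      rw [Real.norm_eq_abs, abs_abs, Real.norm_eq_abs, abs_of_nonneg (hφnonneg x hx.1), add_zero]
      exact hub x hx.1 hx.2.le)
  have hφt : φ t = 0 := by
    have h2 := hg t ⟨ht, le_refl t⟩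
    rw [gronwallBound_ε0_δ0, Real.norm_eq_abs, abs_of_nonneg (hφnonneg t ht)] at h2
    linarith [hφnonneg t ht]
  have hut : u t = 0 := by
    have h1 := hub t ht (le_refl t)
    rw [hφt, mul_zero] at h1
    exact abs_eq_zero.mp (le_antisymm h1 (abs_nonneg _))
  have hqr : q t = r t := by
    have h3 : q t - r t = 0 := hut
    linarith
  rw [hqr, hr]

theorem stmt15
    (W : SchwartzMap R3 ℝ)
    (hWrad : ∀ x y : R3, ‖x‖ = ‖y‖ → W x = W y)
    (hWnorm : |((2*π) ^ (-(3:ℝ)/2)) * ∫ x : R3, W x| = 1)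
    (Z : ℝ) (hZ : 0 < Z)
    (K : ℝ → ℝ) (hK0 : K 0 = 1)
    (hK : ∀ t : ℝ, 0 ≤ t →
      HasDerivAt K (-(Z * ∫ s in (0:ℝ)..t, Mfun (⇑W) (t - s) * K s)) t)
    (q h : ℝ → ℝ) (C₁ c₂ : ℝ)
    (hqb : ∀ t : ℝ, 0 ≤ t → |q t| ≤ C₁ * (1+t) ^ (-(2:ℝ)))
    (hq : ∀ t : ℝ, 0 ≤ t →
      HasDerivAt q (-(Z * ∫ s in (0:ℝ)..t, Mfun (⇑W) (t - s) * q s) + h t) t)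
    (hhc : ContinuousOn h (Set.Ici 0))
    (hhb : ∀ t : ℝ, 0 ≤ t → |h t| ≤ c₂ * (1+t) ^ (-(3:ℝ)/2)) :
    ∀ t : ℝ, 0 ≤ t → q t = K t * q 0 + ∫ s in (0:ℝ)..t, K (t-s) * h s := by
  obtain ⟨B, hB0, hB⟩ := Mfun_bound W
  set M : ℝ → ℝ := Mfun (⇑W) with hM
  have hMc : Continuous M := Mfun_cont W
  set K' : ℝ → ℝ := fun t => K (max t 0) with hK'
  set q' : ℝ → ℝ := fun t => q (max t 0) with hq'
  set h' : ℝ → ℝ := fun t => h (max t 0) with hh'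
  have hmaxc : Continuous fun t : ℝ => max t 0 := continuous_id.max continuous_const
  have hKc : Continuous K' := by
    rw [continuous_iff_continuousAt]
    intro t
    have h1 : ContinuousAt K (max t 0) := (hK _ (le_max_right t 0)).continuousAt
    exact ContinuousAt.comp (g := K) (f := fun t : ℝ => max t 0) h1 hmaxc.continuousAt
  have hqc : Continuous q' := by
    rw [continuous_iff_continuousAt]
    intro t
    have h1 : ContinuousAt q (max t 0) := (hq _ (le_max_right t 0)).continuousAt
    exact ContinuousAt.comp (g := q) (f := fun t : ℝ => max t 0) h1 hmaxc.continuousAt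
  have hhc' : Continuous h' := hhc.comp_continuous hmaxc fun t => Set.mem_Ici.2 (le_max_right t 0)
  have hKeq : ∀ t : ℝ, 0 ≤ t → K' t = K t := by
    intro t ht
    rw [hK']
    simp only []
    rw [max_eq_left ht]
  have hqeq : ∀ t : ℝ, 0 ≤ t → q' t = q t := by
    intro t ht
    rw [hq']
    simp only []
    rw [max_eq_left ht]
  have hheq : ∀ t : ℝ, 0 ≤ t → h' t = h t := by
    intro t ht
    rw [hh']
    simp only []
    rw [max_eq_left ht]
  have hconvc : ∀ f : ℝ → ℝ, Continuous f →
      Continuous (fun τ => ∫ s in (0:ℝ)..τ, M (τ - s) * f s) := by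
    intro f hf
    apply intervalIntegral.continuous_parametric_intervalIntegral_of_continuous
      (f := fun τ s => M (τ - s) * f s) (s := id) _ continuous_id
    exact (hMc.comp (continuous_fst.sub continuous_snd)).mul (hf.comp continuous_snd)
  -- integrated equation for K'
  have intK : ∀ t : ℝ, 0 ≤ t →
      K' t = 1 + ∫ τ in (0:ℝ)..t, -(Z * ∫ s in (0:ℝ)..τ, M (τ - s) * K' s) := by
    intro t ht
    have hFc : Continuous fun τ => -(Z * ∫ s in (0:ℝ)..τ, M (τ - s) * K' s) :=
      (continuous_const.mul (hconvc K' hKc)).neg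
    have hder : ∀ x ∈ Set.uIcc (0:ℝ) t,
        HasDerivAt K (-(Z * ∫ s in (0:ℝ)..x, M (x - s) * K' s)) x := by
      intro x hx
      rw [Set.uIcc_of_le ht] at hx
      have hx0 : 0 ≤ x := hx.1
      have e : (∫ s in (0:ℝ)..x, M (x - s) * K' s) = ∫ s in (0:ℝ)..x, M (x - s) * K s := by
        apply intervalIntegral.integral_congr
        intro s hs
        rw [Set.uIcc_of_le hx0] at hs
        simp only []
        rw [hKeq s hs.1]
      rw [e]
      exact hK x hx0
    have e2 := intervalIntegral.integral_eq_sub_of_hasDerivAt hder (hFc.intervalIntegrable _ _)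
    rw [hK0] at e2
    rw [hKeq t ht]
    linarith
  -- integrated equation for q'
  have intq : ∀ t : ℝ, 0 ≤ t →
      q' t = q' 0 + ∫ τ in (0:ℝ)..t,
        (-(Z * ∫ s in (0:ℝ)..τ, M (τ - s) * q' s) + h' τ) := by
    intro t ht
    have hFc : Continuous fun τ => -(Z * ∫ s in (0:ℝ)..τ, M (τ - s) * q' s) + h' τ :=
      ((continuous_const.mul (hconvc q' hqc)).neg).add hhc'
    have hder : ∀ x ∈ Set.uIcc (0:ℝ) t,
        HasDerivAt q (-(Z * ∫ s in (0:ℝ)..x, M (x - s) * q' s) + h' x) x := by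
      intro x hx
      rw [Set.uIcc_of_le ht] at hx
      have hx0 : 0 ≤ x := hx.1
      have e : (∫ s in (0:ℝ)..x, M (x - s) * q' s) = ∫ s in (0:ℝ)..x, M (x - s) * q s := by
        apply intervalIntegral.integral_congr
        intro s hs
        rw [Set.uIcc_of_le hx0] at hs
        simp only []
        rw [hqeq s hs.1]
      rw [e, hheq x hx0]
      exact hq x hx0
    have e2 := intervalIntegral.integral_eq_sub_of_hasDerivAt hder (hFc.intervalIntegrable _ _)
    rw [hqeq t ht, hqeq 0 le_rfl]
    linarith
  have main := duhamel M hMc B hB Z hZ.le K' q' h' hKc hqc hhc' intK intq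
  intro t ht
  have := main t ht
  rw [hqeq t ht, hKeq t ht, hqeq 0 le_rfl] at this
  rw [this]
  congr 1
  apply intervalIntegral.integral_congr
  intro s hs
  rw [Set.uIcc_of_le ht] at hs
  simp only []
  rw [hKeq (t - s) (by linarith [hs.2]), hheq s hs.1]
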